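/- Let σ be a positive definite Hermitian matrix on Fin n and let v : Fin n → ℂ be a unit vector. Then Re ⟨v, (log σ) · v⟩ ≤ log (Re ⟨v, σ · v⟩), where log σ is the matrix logarithm via the spectral functional calculus and the log on the right is the real natural logarithm. Equivalently, for the pure state Φ := v vᴴ and a positive definite density matrix σ, the quantum relative entropy satisfies D(Φ‖σ) = −Tr[Φ · log₂ σ] ≥ −log₂ Tr[Φ · σ]. -/

import Mathlib

open Matrix Kronecker
open scoped ComplexOrder

open scoped Classical in
noncomputable def matSqrt {n : Type*} [Fintype n] [DecidableEq n] (A : Matrix n n ℂ) :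
    Matrix n n ℂ :=
  if h : A.PosSemidef then
    (h.1.eigenvectorUnitary : Matrix n n ℂ) *
      Matrix.diagonal (fun i => (Real.sqrt (h.1.eigenvalues i) : ℂ)) *
      (star h.1.eigenvectorUnitary : Matrix n n ℂ)
  else 0

noncomputable def rootFidelity {n : Type*} [Fintype n] [DecidableEq n]
    (ρ σ : Matrix n n ℂ) : ℝ :=
  (matSqrt (matSqrt σ * ρ * matSqrt σ)).trace.re

noncomputable def fidelity {n : Type*} [Fintype n] [DecidableEq n]
    (ρ σ : Matrix n n ℂ) : ℝ :=
  (rootFidelity ρ σ) ^ 2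

noncomputable def traceNorm {n : Type*} [Fintype n] [DecidableEq n] (A : Matrix n n ℂ) : ℝ :=
  (matSqrt (Aᴴ * A)).trace.re

/-- The set of attainable type-II error values in hypothesis testing. -/
def testValues {n : Type*} [Fintype n] [DecidableEq n] (ρ σ : Matrix n n ℂ) (ε : ℝ) :
    Set ℝ :=
  { x | ∃ Λ : Matrix n n ℂ, Λ.PosSemidef ∧ (1 - Λ).PosSemidef ∧
      1 - ε ≤ (Λ * ρ).trace.re ∧ x = (Λ * σ).trace.re }

/-- ε-hypothesis-testing relative entropy. -/
noncomputable def Dh {n : Type*} [Fintype n] [DecidableEq n]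
    (ρ σ : Matrix n n ℂ) (ε : ℝ) : ℝ :=
  - Real.logb 2 (sInf (testValues ρ σ ε))

/-- GHZ unit vector. -/
noncomputable def ghz (M K : ℕ) : (Fin M → Fin K) → ℂ :=
  fun f => if ∃ c, ∀ m, f m = c then ((Real.sqrt K : ℂ))⁻¹ else 0

/-- GHZ rank-one projection. -/
noncomputable def ghzProj (M K : ℕ) : Matrix (Fin M → Fin K) (Fin M → Fin K) ℂ :=
  Matrix.vecMulVec (ghz M K) (star ∘ ghz M K)

/-- The twisting unitary. -/
def twist (M K d : ℕ)
    (U : (Fin M → Fin K) → Matrix (Fin M → Fin d) (Fin M → Fin d) ℂ) :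
    Matrix ((Fin M → Fin K) × (Fin M → Fin d)) ((Fin M → Fin K) × (Fin M → Fin d)) ℂ :=
  Matrix.of fun p q => if p.1 = q.1 then U p.1 p.2 q.2 else 0

/-- The privacy test `Π = W (Φ ⊗ 1) Wᴴ`. -/
noncomputable def privacyTest (M K d : ℕ)
    (U : (Fin M → Fin K) → Matrix (Fin M → Fin d) (Fin M → Fin d) ℂ) :
    Matrix ((Fin M → Fin K) × (Fin M → Fin d)) ((Fin M → Fin K) × (Fin M → Fin d)) ℂ :=
  twist M K d U * (ghzProj M K ⊗ₖ (1 : Matrix (Fin M → Fin d) (Fin M → Fin d) ℂ)) *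
    (twist M K d U)ᴴ

/-- The private state `γ = W (Φ ⊗ ω) Wᴴ`. -/
noncomputable def privateState (M K d : ℕ)
    (U : (Fin M → Fin K) → Matrix (Fin M → Fin d) (Fin M → Fin d) ℂ)
    (ω : Matrix (Fin M → Fin d) (Fin M → Fin d) ℂ) :
    Matrix ((Fin M → Fin K) × (Fin M → Fin d)) ((Fin M → Fin K) × (Fin M → Fin d)) ℂ :=
  twist M K d U * (ghzProj M K ⊗ₖ ω) * (twist M K d U)ᴴ

/-- A vector on `𝒦 × 𝒮` is product across the bipartition `J | Jᶜ` of the parties. -/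
def IsProductAcross {M K d : ℕ} (J : Set (Fin M))
    (v : (Fin M → Fin K) × (Fin M → Fin d) → ℂ) : Prop :=
  ∃ (v₁ : ((↥J) → Fin K) × ((↥J) → Fin d) → ℂ)
    (v₂ : ((↥(Jᶜ)) → Fin K) × ((↥(Jᶜ)) → Fin d) → ℂ),
    ∀ (f : Fin M → Fin K) (x : Fin M → Fin d),
      v (f, x) = v₁ (fun m => f m.1, fun m => x m.1) * v₂ (fun m => f m.1, fun m => x m.1)

/-- Biseparability: a finite convex combination of pure states, each product across
some nontrivial bipartition of the parties. -/
def Biseparable {M K d : ℕ}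
    (σ : Matrix ((Fin M → Fin K) × (Fin M → Fin d))
      ((Fin M → Fin K) × (Fin M → Fin d)) ℂ) : Prop :=
  ∃ (N : ℕ) (p : Fin N → ℝ) (w : Fin N → ((Fin M → Fin K) × (Fin M → Fin d)) → ℂ)
    (J : Fin N → Set (Fin M)),
    (∀ t, 0 ≤ p t) ∧ (∑ t, p t = 1) ∧
    (∀ t, ∑ i, ‖w t i‖ ^ 2 = 1) ∧
    (∀ t, J t ≠ ∅ ∧ J t ≠ Set.univ ∧ IsProductAcross (J t) (w t)) ∧
    σ = ∑ t, (p t : ℂ) • Matrix.vecMulVec (w t) (star ∘ w t)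

/-- Partial trace over the second tensor factor. -/
noncomputable def partialTrace₂ {A B : Type*} [Fintype B] (τ : Matrix (A × B) (A × B) ℂ) :
    Matrix A A ℂ :=
  Matrix.of fun a a' => ∑ b, τ (a, b) (a', b)

/-- Matrix logarithm of a Hermitian matrix via the spectral functional calculus. -/
noncomputable def matLog {n : Type*} [Fintype n] [DecidableEq n] (A : Matrix n n ℂ) :
    Matrix n n ℂ :=
  if hA : A.IsHermitian then
    (hA.eigenvectorUnitary : Matrix n n ℂ) *
      Matrix.diagonal (fun i => (Real.log (hA.eigenvalues i) : ℂ)) *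
      (star hA.eigenvectorUnitary : Matrix n n ℂ)
  else 0

/-- for a positive definite `σ` and a unit vector `v`,
`Re ⟨v, (log σ) v⟩ ≤ log (Re ⟨v, σ v⟩)` (concavity of the logarithm; equivalently
`D(Φ‖σ) ≥ −log₂ Tr[Φ σ]` for the pure state `Φ = v vᴴ`). -/
theorem stmt_14 (n : ℕ) (σ : Matrix (Fin n) (Fin n) ℂ) (hσ : σ.PosDef)
    (v : Fin n → ℂ) (hv : ∑ i, ‖v i‖ ^ 2 = 1) :
    (star v ⬝ᵥ (matLog σ).mulVec v).re ≤ Real.log ((star v ⬝ᵥ σ.mulVec v).re) := by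
  have hA : σ.IsHermitian := hσ.1
  set U : Matrix (Fin n) (Fin n) ℂ := (hA.eigenvectorUnitary : Matrix (Fin n) (Fin n) ℂ) with hU
  set w : Fin n → ℂ := Uᴴ *ᵥ v with hw
  have key : ∀ g : Fin n → ℝ,
      (star v ⬝ᵥ (U * Matrix.diagonal (fun i => (g i : ℂ)) * Uᴴ).mulVec v).re
        = ∑ i, g i * ‖w i‖ ^ 2 := by
    intro g
    have h1 : (U * Matrix.diagonal (fun i => (g i : ℂ)) * Uᴴ) *ᵥ v
        = U *ᵥ (Matrix.diagonal (fun i => (g i : ℂ)) *ᵥ w) := by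
      rw [hw, mulVec_mulVec, mulVec_mulVec]
    rw [h1, Matrix.dotProduct_mulVec]
    have h2 : star v ᵥ* U = star w := by
      rw [hw, star_mulVec, conjTranspose_conjTranspose]
    rw [h2]
    have h3 : ∀ i, (Matrix.diagonal (fun i => (g i : ℂ)) *ᵥ w) i = (g i : ℂ) * w i := by
      intro i; simp [mulVec_diagonal]
    simp only [dotProduct, Pi.star_apply, h3, Complex.re_sum]
    congr 1; ext i
    rw [show star (w i) * ((g i : ℂ) * w i)
        = (starRingEnd ℂ) (w i) * w i * (g i : ℂ) by rw [Complex.star_def]; ring,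
      RCLike.conj_mul, mul_comm]
    simp [← Complex.ofReal_pow, ← Complex.ofReal_mul]
  -- sum of weights is 1
  have hsum : ∑ i, ‖w i‖ ^ 2 = 1 := by
    have h1 : U * Matrix.diagonal (fun _ : Fin n => ((1 : ℝ) : ℂ)) * Uᴴ = 1 := by
      simp only [Complex.ofReal_one, Matrix.diagonal_one, mul_one]
      exact hA.eigenvectorUnitary.2.2
    have := key (fun _ => 1)
    rw [h1] at this
    simp only [one_mul] at this
    rw [← this, Matrix.one_mulVec]
    simp only [dotProduct, Pi.star_apply, Complex.re_sum]
    rw [← hv]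
    congr 1; ext i
    rw [Complex.star_def, RCLike.conj_mul]
    simp [← Complex.ofReal_pow]
  have hσeq : σ = U * Matrix.diagonal (fun i => ((hA.eigenvalues i : ℝ) : ℂ)) * Uᴴ := by
    rw [hU, ← Matrix.star_eq_conjTranspose]; exact hA.spectral_theorem
  have hlog : matLog σ = U * Matrix.diagonal (fun i => ((Real.log (hA.eigenvalues i) : ℝ) : ℂ)) * Uᴴ := by
    rw [matLog, dif_pos hA, Matrix.star_eq_conjTranspose, ← hU]
  rw [hlog]
  conv_rhs => rw [hσeq]
  rw [key, key]
  have hpos : ∀ i, hA.eigenvalues i ∈ Set.Ioi (0 : ℝ) := fun i => hσ.eigenvalues_pos i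
  have := ((strictConcaveOn_log_Ioi).concaveOn).le_map_sum
    (t := Finset.univ) (w := fun i => ‖w i‖ ^ 2) (p := fun i => hA.eigenvalues i)
    (fun i _ => by positivity) (by simpa using hsum) (fun i _ => hpos i)
  simpa [smul_eq_mul, mul_comm] using this
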